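/- Let p(n) denote the number of partitions of n. Then for all n ≥ 0, p(5n + 4) ≡ 0 (mod 5). -/

import Mathlib

namespace Raman
open PowerSeries Finset

instance fact5 : Fact (Nat.Prime 5) := ⟨by norm_num⟩
noncomputable section

abbrev A : Type := PowerSeries (ZMod 5)

instance : CharP A 5 := charP_of_injective_ringHom (PowerSeries.C_injective) 5

/-- congruence mod `X^d` -/
def md (d : ℕ) (p q : A) : Prop := (X : A)^d ∣ p - q

lemma md_refl (d : ℕ) (p : A) : md d p p := by simp [md]

lemma md_symm {d : ℕ} {p q : A} (h : md d p q) : md d q p := by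
  rw [md, ← neg_sub p q]
  exact h.neg_right

lemma md_trans {d : ℕ} {p q r : A} (h : md d p q) (h' : md d q r) : md d p r := by
  have := dvd_add h h'
  simpa [md, sub_add_sub_cancel] using this

lemma md_mul {d : ℕ} {p q r s : A} (h : md d p q) (h' : md d r s) :
    md d (p * r) (q * s) := by
  have : p * r - q * s = (p - q) * r + q * (r - s) := by ring
  rw [md, this]
  exact dvd_add (h.mul_right r) (h'.mul_left q)

lemma md_pow {d : ℕ} {p q : A} (h : md d p q) (m : ℕ) : md d (p^m) (q^m) := by
  induction m with
  | zero => simpa using md_refl d 1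
  | succ k ih => rw [pow_succ, pow_succ]; exact md_mul ih h

lemma md_mono {d e : ℕ} (hde : e ≤ d) {p q : A} (h : md d p q) : md e p q :=
  dvd_trans (pow_dvd_pow _ hde) h

lemma md_coeff {d : ℕ} {p q : A} (h : md d p q) {i : ℕ} (hi : i < d) :
    coeff i p = coeff i q := by
  rw [md, PowerSeries.X_pow_dvd_iff] at h
  have := h i hi
  rw [map_sub, sub_eq_zero] at this
  exact this

lemma md_prod_one {d : ℕ} {s : Finset ℕ} {f : ℕ → A} (h : ∀ i ∈ s, md d (f i) 1) :
    md d (∏ i ∈ s, f i) 1 := by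
  classical
  induction s using Finset.induction with
  | empty => simpa using md_refl d 1
  | insert a t hx ih =>
    rw [Finset.prod_insert hx]
    have := md_mul (h a (mem_insert_self a t)) (ih fun i hi => h i (mem_insert_of_mem hi))
    simpa using this

lemma md_sum {d : ℕ} {s : Finset ℕ} {f g : ℕ → A} (h : ∀ i ∈ s, md d (f i) (g i)) :
    md d (∑ i ∈ s, f i) (∑ i ∈ s, g i) := by
  rw [md, ← Finset.sum_sub_distrib]
  exact Finset.dvd_sum fun i hi => h i hi

lemma md_one_of_le {d j : ℕ} (h : d ≤ j) : md d (1 - (X:A)^j) 1 := by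
  rw [md]
  simpa using (pow_dvd_pow (X:A) h).neg_right

lemma md_zero_of_le {d j : ℕ} (h : d ≤ j) (r : A) : md d ((X:A)^j * r) 0 := by
  rw [md, sub_zero]
  exact (pow_dvd_pow (X:A) h).mul_right r

/-- Gaussian binomial coefficients, via the `q`-Pascal recurrence. -/
def gb : ℕ → ℕ → A
  | 0, 0 => 1
  | 0, _+1 => 0
  | _+1, 0 => 1
  | (a+1), (b+1) => gb a (b+1) + X^(a-b) * gb a b

@[simp] lemma gb_zero_right : ∀ a, gb a 0 = 1
  | 0 => rfl
  | _+1 => rfl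

lemma gb_eq_zero : ∀ {a b}, a < b → gb a b = 0
  | 0, _+1, _ => rfl
  | a+1, b+1, h => by
      rw [gb, gb_eq_zero (by omega), gb_eq_zero (by omega), mul_zero, add_zero]

@[simp] lemma gb_diag : ∀ a, gb a a = 1
  | 0 => rfl
  | a+1 => by rw [gb, gb_eq_zero (by omega), gb_diag a, Nat.sub_self, pow_zero, zero_add, one_mul]

/-- the finite product `∏_{i=1}^m (1 - X^i)`. -/
def Fp (m : ℕ) : A := ∏ i ∈ range m, (1 - X^(i+1))

@[simp] lemma Fp_zero : Fp 0 = 1 := by simp [Fp]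

lemma Fp_succ (m : ℕ) : Fp (m+1) = Fp m * (1 - X^(m+1)) := Finset.prod_range_succ _ _

lemma constCoeff_Fp (m : ℕ) : constantCoeff (Fp m) = 1 := by
  rw [Fp, map_prod]
  apply Finset.prod_eq_one
  intro i _
  rw [map_sub, map_one, map_pow, constantCoeff_X, zero_pow (by omega), sub_zero]

lemma Fp_ne_zero (m : ℕ) : Fp m ≠ 0 := by
  intro h
  have := constCoeff_Fp m
  rw [h, map_zero] at this
  exact zero_ne_one this

lemma Fp_add (c b : ℕ) : Fp (c + b) = Fp c * ∏ i ∈ range b, (1 - X^(c+i+1)) := by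
  rw [Fp, Finset.prod_range_add]
  rfl

/-- product formula for Gaussian binomials -/
lemma prodF : ∀ a b, b ≤ a → Fp b * Fp (a-b) * gb a b = Fp a := by
  intro a
  induction a with
  | zero => intro b hb; interval_cases b; simp
  | succ a ih =>
    intro b hb
    match b with
    | 0 => simp
    | b'+1 =>
      rcases Nat.lt_or_ge b' a with hlt | hge
      · -- b'+1 ≤ a
        have hble : b' + 1 ≤ a := hlt
        rw [gb, mul_add]
        have e1 : a + 1 - (b'+1) = (a - (b'+1)) + 1 := Nat.succ_sub hble
        have e2 : Fp (a+1-(b'+1)) = Fp (a - (b'+1)) * (1 - X^(a-b')) := by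
          have e2' : a - (b'+1) + 1 = a - b' := by omega
          rw [e1, Fp_succ, e2']
        have t1 : Fp (b'+1) * Fp (a+1-(b'+1)) * gb a (b'+1) = (1 - X^(a-b')) * Fp a := by
          rw [e2]
          calc Fp (b'+1) * (Fp (a - (b'+1)) * (1 - X^(a-b'))) * gb a (b'+1)
              = (Fp (b'+1) * Fp (a-(b'+1)) * gb a (b'+1)) * (1 - X^(a-b')) := by ring
            _ = Fp a * (1 - X^(a-b')) := by rw [ih (b'+1) hble]
            _ = (1 - X^(a-b')) * Fp a := by ring
        have t2 : Fp (b'+1) * Fp (a+1-(b'+1)) * (X^(a-b') * gb a b') =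
            X^(a-b') * (1 - X^(b'+1)) * Fp a := by
          have e3 : Fp (b'+1) = Fp b' * (1 - X^(b'+1)) := Fp_succ b'
          have e4 : a + 1 - (b'+1) = a - b' := by omega
          calc Fp (b'+1) * Fp (a+1-(b'+1)) * (X^(a-b') * gb a b')
              = X^(a-b') * (1 - X^(b'+1)) * (Fp b' * Fp (a-b') * gb a b') := by
                rw [e3, e4]; ring
            _ = X^(a-b') * (1 - X^(b'+1)) * Fp a := by rw [ih b' (by omega)]
        rw [t1, t2, Fp_succ]
        have e5 : X^(a-b') * X^(b'+1) = (X:A)^(a+1) := by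
          rw [← pow_add]
          congr 1
          omega
        calc (1 - X^(a-b')) * Fp a + X^(a-b') * (1 - X^(b'+1)) * Fp a
            = Fp a * (1 - X^(a-b') * X^(b'+1)) := by ring
          _ = Fp a * (1 - X^(a+1)) := by rw [e5]
      · -- b'+1 = a+1
        have hba : b' = a := by omega
        subst hba
        simp [gb_diag]




lemma gb_succ_succ (a b : ℕ) : gb (a+1) (b+1) = gb a (b+1) + X^(a-b) * gb a b := by rw [gb]

lemma pascal2 (a b : ℕ) : gb (a+1) (b+1) = X^(b+1) * gb a (b+1) + gb a b := by
  rcases Nat.lt_or_ge a b with h | h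
  · -- b > a : everything zero
    rw [gb_eq_zero (by omega), gb_eq_zero (by omega), gb_eq_zero (by omega)]
    ring
  · -- b ≤ a
    have hne := mul_ne_zero (Fp_ne_zero (b+1)) (Fp_ne_zero (a-b))
    apply mul_left_cancel₀ hne
    have lhs : Fp (b+1) * Fp (a-b) * gb (a+1) (b+1) = Fp (a+1) := by
      have : a - b = (a+1) - (b+1) := by omega
      rw [this]
      exact prodF (a+1) (b+1) (by omega)
    rw [lhs, mul_add]
    rcases Nat.lt_or_ge b a with hlt | hge
    · -- b < a
      have t1 : Fp (b+1) * Fp (a-b) * (X^(b+1) * gb a (b+1)) =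
          X^(b+1) * (1 - X^(a-b)) * Fp a := by
        have e1 : Fp (a-b) = Fp (a-(b+1)) * (1 - X^(a-b)) := by
          have e : a - b = (a-(b+1)) + 1 := by omega
          have e' : a - (b+1) + 1 = a - b := by omega
          rw [e, Fp_succ, e']
        calc Fp (b+1) * Fp (a-b) * (X^(b+1) * gb a (b+1))
            = X^(b+1) * (1 - X^(a-b)) * (Fp (b+1) * Fp (a-(b+1)) * gb a (b+1)) := by
              rw [e1]; ring
          _ = X^(b+1) * (1 - X^(a-b)) * Fp a := by rw [prodF a (b+1) (by omega)]
      have t2 : Fp (b+1) * Fp (a-b) * gb a b = (1 - X^(b+1)) * Fp a := by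
        calc Fp (b+1) * Fp (a-b) * gb a b
            = (1 - X^(b+1)) * (Fp b * Fp (a-b) * gb a b) := by rw [Fp_succ]; ring
          _ = (1 - X^(b+1)) * Fp a := by rw [prodF a b (by omega)]
      rw [t1, t2, Fp_succ]
      have e5 : X^(b+1) * X^(a-b) = (X:A)^(a+1) := by
        rw [← pow_add]; congr 1; omega
      have : X^(b+1) * (1 - X^(a-b)) * Fp a + (1 - X^(b+1)) * Fp a
          = Fp a * (1 - X^(a+1)) := by
        rw [← e5]; ring
      exact this.symm
    · -- b = a
      have hba : b = a := by omega
      subst hba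
      rw [gb_eq_zero (Nat.lt_succ_self b), gb_diag, Nat.sub_self, Fp_zero]
      ring
lemma gb3 (n k : ℕ) :
    gb (2*n+2) (k+2) = X^(k+2) * gb (2*n) (k+2) + (1 + X^(2*n+1)) * gb (2*n) (k+1)
      + X^(2*n-k) * gb (2*n) k := by
  rcases Nat.lt_or_ge (2*n) k with h | h
  · rw [gb_eq_zero (by omega), gb_eq_zero (by omega), gb_eq_zero (by omega),
      gb_eq_zero (by omega)]
    ring
  · have e0 : (2*n+2 : ℕ) = (2*n+1) + 1 := by omega
    have step1 : gb (2*n+2) (k+2) = gb (2*n+1) (k+2) + X^(2*n-k) * gb (2*n+1) (k+1) := by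
      have ee : 2*n+1 - (k+1) = 2*n - k := by omega
      rw [e0]
      show gb ((2*n+1)+1) ((k+1)+1) = _
      rw [gb, ee]
    rw [step1, pascal2 (2*n) (k+1), pascal2 (2*n) k]
    have e5 : X^(2*n-k) * X^(k+1) = (X:A)^(2*n+1) := by
      rw [← pow_add]; congr 1; omega
    calc X^(k+2) * gb (2*n) (k+2) + gb (2*n) (k+1)
          + X^(2*n-k) * (X^(k+1) * gb (2*n) (k+1) + gb (2*n) k)
        = X^(k+2) * gb (2*n) (k+2) + (1 + X^(2*n-k) * X^(k+1)) * gb (2*n) (k+1)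
          + X^(2*n-k) * gb (2*n) k := by ring
      _ = _ := by rw [e5]

lemma gb1 (n : ℕ) : gb (2*n+2) 1 = X^1 * gb (2*n) 1 + (1 + X^(2*n+1)) * gb (2*n) 0 := by
  have e0 : (2*n+2 : ℕ) = (2*n+1) + 1 := by omega
  have step1 : gb (2*n+2) 1 = gb (2*n+1) 1 + X^(2*n+1) * gb (2*n+1) 0 := by
    conv_lhs => rw [e0, show (1:ℕ) = 0 + 1 from rfl, gb_succ_succ]
    simp only [Nat.sub_zero, gb_zero_right, mul_one]
  rw [step1, pascal2 (2*n) 0]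
  simp only [gb_zero_right, mul_one]
  ring

/-- stabilisation: `Fp N * gb a b ≡ 1` modulo a high power of `X`. -/
lemma md_Fp_gb {N a b : ℕ} (hba : b ≤ a) (hbN : b ≤ N) :
    md (min b (a-b) + 1) (Fp N * gb a b) 1 := by
  have key : Fp b * gb a b = ∏ i ∈ range b, (1 - X^((a-b)+i+1)) := by
    apply mul_left_cancel₀ (Fp_ne_zero (a-b))
    have e : a - b + b = a := by omega
    calc Fp (a-b) * (Fp b * gb a b) = Fp b * Fp (a-b) * gb a b := by ring
      _ = Fp a := prodF a b hba
      _ = Fp ((a-b) + b) := by rw [e]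
      _ = Fp (a-b) * ∏ i ∈ range b, (1 - X^((a-b)+i+1)) := Fp_add _ _
  have eN : Fp N = Fp b * ∏ i ∈ range (N-b), (1 - X^(b+i+1)) := by
    have e : b + (N-b) = N := by omega
    rw [← Fp_add, e]
  have : Fp N * gb a b =
      (∏ i ∈ range b, (1 - X^((a-b)+i+1))) * ∏ i ∈ range (N-b), (1 - X^(b+i+1)) := by
    rw [eN]
    calc Fp b * (∏ i ∈ range (N-b), (1 - X^(b+i+1))) * gb a b
        = (Fp b * gb a b) * ∏ i ∈ range (N-b), (1 - X^(b+i+1)) := by ring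
      _ = _ := by rw [key]
  rw [this]
  have h1 : md (min b (a-b) + 1) (∏ i ∈ range b, (1 - X^((a-b)+i+1))) 1 :=
    md_prod_one fun i _ => md_one_of_le (by omega)
  have h2 : md (min b (a-b) + 1) (∏ i ∈ range (N-b), (1 - X^(b+i+1))) 1 :=
    md_prod_one fun i _ => md_one_of_le (by omega)
  simpa using md_mul h1 h2
-- stage 3
/-! ### triangular numbers and the exponent function `w` -/

def tri (j : ℕ) : ℕ := j*(j+1)/2

lemma two_tri (j : ℕ) : 2 * tri j = j * (j+1) := by
  rw [tri]
  exact Nat.mul_div_cancel' (even_iff_two_dvd.mp (Nat.even_mul_succ_self j))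

lemma tri_succ (j : ℕ) : tri (j+1) = tri j + (j+1) := by
  have e : (j+1)*(j+1+1) = j*(j+1) + (j+1)*2 := by ring
  rw [tri, tri, e, Nat.add_mul_div_right _ _ (by norm_num : (0:ℕ) < 2)]

lemma tri_ge (j : ℕ) : j ≤ tri j := by
  induction j with
  | zero => simp [tri]
  | succ k ih => rw [tri_succ]; omega

@[simp] lemma tri_zero : tri 0 = 0 := rfl

def w (n k : ℕ) : ℕ := if n ≤ k then tri (k - n) else tri (n - k - 1)

lemma w_ge (n j : ℕ) : w n (n + j) = tri j := by
  rw [w, if_pos (by omega)]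
  congr 1
  omega

lemma w_lt {n j : ℕ} (h : j < n) : w n (n - 1 - j) = tri j := by
  rw [w, if_neg (by omega)]
  congr 1
  omega

lemma w1 (n k : ℕ) : w (n+1) k + k = w n k + n := by
  rcases Nat.lt_or_ge k (n+1) with h | h
  · rcases Nat.lt_or_ge k n with h' | h'
    · rw [w, if_neg (by omega), w, if_neg (by omega)]
      have e : n - k = (n - k - 1) + 1 := by omega
      have e2 : n + 1 - k - 1 = (n - k - 1) + 1 := by omega
      rw [e2, tri_succ]
      omega
    · have : k = n := by omega
      subst this
      rw [w, if_neg (by omega), w, if_pos le_rfl]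
      simp
  · rw [w, if_pos (by omega), w, if_pos (by omega)]
    have e : k - n = (k - (n+1)) + 1 := by omega
    rw [e, tri_succ]
    omega

lemma w2 (n k : ℕ) : w (n+1) (k+1) = w n k := by
  rw [w, w]
  rcases Nat.lt_or_ge k n with h | h
  · rw [if_neg (by omega), if_neg (by omega)]
    congr 1
    omega
  · rw [if_pos (by omega), if_pos (by omega)]
    congr 1
    omega

lemma w3 (n k : ℕ) : w (n+1) (k+2) + n = w n k + (k+1) := by
  have h1 := w1 n (k+1)
  have h2 : w (n+1) (k+2) = w n (k+1) := w2 n (k+1)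
  have h3 : w (n+1) (k+1) = w n k := w2 n k
  omega

/-! ### the coefficients `sv` -/

def sv (n k : ℕ) : A := gb (2*n) k * X^(w n k)

lemma sv_eq_zero {n k : ℕ} (h : 2*n < k) : sv n k = 0 := by
  rw [sv, gb_eq_zero h, zero_mul]

lemma sv0 (n : ℕ) : sv (n+1) 0 = X^n * sv n 0 := by
  rw [sv, sv]
  have e : 2*(n+1) = 2*n + 2 := by omega
  rw [e]
  simp only [gb_zero_right, one_mul]
  rw [← pow_add]
  congr 1
  have := w1 n 0
  omega

lemma sv1 (n : ℕ) : sv (n+1) 1 = X^n * sv n 1 + (1 + X^(2*n+1)) * sv n 0 := by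
  rw [sv, sv, sv]
  have e : 2*(n+1) = 2*n + 2 := by omega
  rw [e, gb1, add_mul]
  congr 1
  · have he : 1 + w (n+1) 1 = n + w n 1 := by have h := w1 n 1; omega
    calc X^1 * gb (2*n) 1 * X^(w (n+1) 1) = gb (2*n) 1 * (X^1 * X^(w (n+1) 1)) := by ring
      _ = gb (2*n) 1 * (X^(n) * X^(w n 1)) := by rw [← pow_add, ← pow_add, he]
      _ = X^n * (gb (2*n) 1 * X^(w n 1)) := by ring
  · have h := w2 n 0
    rw [h]
    ring
lemma sv2 (n k : ℕ) : sv (n+1) (k+2) =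
    X^n * sv n (k+2) + (1 + X^(2*n+1)) * sv n (k+1) + X^(n+1) * sv n k := by
  rcases Nat.lt_or_ge (2*n) k with h | h
  · rw [sv_eq_zero (show 2*(n+1) < k+2 by omega), sv_eq_zero (show 2*n < k+2 by omega),
      sv_eq_zero (show 2*n < k+1 by omega), sv_eq_zero (show 2*n < k by omega)]
    ring
  · rw [sv, sv, sv, sv]
    have e : 2*(n+1) = 2*n + 2 := by omega
    rw [e, gb3, add_mul, add_mul]
    congr 1
    · congr 1
      · have he : (k+2) + w (n+1) (k+2) = n + w n (k+2) := by
          have hw := w1 n (k+2); omega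
        calc X^(k+2) * gb (2*n) (k+2) * X^(w (n+1) (k+2))
            = gb (2*n) (k+2) * (X^(k+2) * X^(w (n+1) (k+2))) := by ring
          _ = gb (2*n) (k+2) * (X^n * X^(w n (k+2))) := by
              rw [← pow_add, ← pow_add, he]
          _ = X^n * (gb (2*n) (k+2) * X^(w n (k+2))) := by ring
      · rw [w2 n (k+1)]
        ring
    · have he : (2*n-k) + w (n+1) (k+2) = (n+1) + w n k := by
        have hw := w3 n k; omega
      calc X^(2*n-k) * gb (2*n) k * X^(w (n+1) (k+2))
          = gb (2*n) k * (X^(2*n-k) * X^(w (n+1) (k+2))) := by ring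
        _ = gb (2*n) k * (X^(n+1) * X^(w n k)) := by
            rw [← pow_add, ← pow_add, he]
        _ = X^(n+1) * (gb (2*n) k * X^(w n k)) := by ring

/-! ### the two-variable polynomial and its coefficients -/

def BnL (n : ℕ) : Polynomial A := ∏ i ∈ range n, (1 + Polynomial.C ((X:A)^(i+1)) * Polynomial.X)
def BnR (n : ℕ) : Polynomial A := ∏ i ∈ range n, (Polynomial.C ((X:A)^i) + Polynomial.X)
def Bn (n : ℕ) : Polynomial A := BnL n * BnR n

lemma coeff_mul_quad (f : Polynomial A) (a b c : A) (k : ℕ) :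
    (f * (Polynomial.C a + Polynomial.C b * Polynomial.X^1 + Polynomial.C c * Polynomial.X^2)).coeff k =
      a * f.coeff k + b * (if 1 ≤ k then f.coeff (k-1) else 0)
        + c * (if 2 ≤ k then f.coeff (k-2) else 0) := by
  have e : f * (Polynomial.C a + Polynomial.C b * Polynomial.X^1 + Polynomial.C c * Polynomial.X^2)
      = f * Polynomial.C a + (f * Polynomial.C b) * Polynomial.X^1
        + (f * Polynomial.C c) * Polynomial.X^2 := by ring
  rw [e, Polynomial.coeff_add, Polynomial.coeff_add, Polynomial.coeff_mul_C,
    Polynomial.coeff_mul_X_pow', Polynomial.coeff_mul_X_pow', Polynomial.coeff_mul_C,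
    Polynomial.coeff_mul_C]
  split_ifs <;> ring

lemma Bn_succ (n : ℕ) : Bn (n+1) = Bn n *
    (Polynomial.C ((X:A)^n) + Polynomial.C (1 + (X:A)^(2*n+1)) * Polynomial.X^1
      + Polynomial.C ((X:A)^(n+1)) * Polynomial.X^2) := by
  have hL : BnL (n+1) = BnL n * (1 + Polynomial.C ((X:A)^(n+1)) * Polynomial.X) :=
    Finset.prod_range_succ _ _
  have hR : BnR (n+1) = BnR n * (Polynomial.C ((X:A)^n) + Polynomial.X) :=
    Finset.prod_range_succ _ _
  rw [Bn, hL, hR, Bn]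
  have key : (1 + Polynomial.C ((X:A)^(n+1)) * Polynomial.X) * (Polynomial.C ((X:A)^n) + Polynomial.X)
      = Polynomial.C ((X:A)^n) + Polynomial.C (1 + (X:A)^(2*n+1)) * Polynomial.X^1
        + Polynomial.C ((X:A)^(n+1)) * Polynomial.X^2 := by
    have e : (X:A)^(n+1) * (X:A)^n = (X:A)^(2*n+1) := by
      rw [← pow_add]; congr 1; omega
    rw [map_add, map_one, ← e, map_mul]
    ring
  rw [← key]
  ring

lemma coeff_Bn (n k : ℕ) : (Bn n).coeff k = sv n k := by
  induction n generalizing k with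
  | zero =>
    rw [Bn, BnL, BnR]
    simp only [range_zero, prod_empty, one_mul, Polynomial.coeff_one]
    rcases k with _ | k'
    · rw [if_pos rfl]
      simp [sv, w, gb_diag]
    · rw [if_neg (by omega), sv, gb_eq_zero (by omega), zero_mul]
  | succ n ih =>
    rw [Bn_succ, coeff_mul_quad, ih, ih, ih]
    rcases k with _ | k'
    · simp only [if_neg (by omega : ¬ (1:ℕ) ≤ 0), if_neg (by omega : ¬ (2:ℕ) ≤ 0)]
      rw [sv0]
      ring
    · rcases k' with _ | k''
      · simp only [if_pos (by omega : (1:ℕ) ≤ 1), if_neg (by omega : ¬ (2:ℕ) ≤ 1)]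
        rw [sv1]
        ring
      · simp only [if_pos (by omega : (1:ℕ) ≤ k''+2), if_pos (by omega : (2:ℕ) ≤ k''+2)]
        rw [sv2]
        norm_num
        congr 1
-- stage 4
/-! ### sum form of `Bn` and the derivative identity -/

lemma md_add {d : ℕ} {p q r s : A} (h : md d p q) (h' : md d r s) :
    md d (p + r) (q + s) := by
  rw [md]
  have e : p + r - (q + s) = (p - q) + (r - s) := by ring
  rw [e]
  exact dvd_add h h'

lemma md_mul_pow {d e : ℕ} {p q : A} (h : md d p q) : md (e + d) (X^e * p) (X^e * q) := by
  rw [md] at h ⊢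
  have e1 : X^e * p - X^e * q = X^e * (p - q) := by ring
  rw [e1, pow_add]
  exact mul_dvd_mul_left _ h

lemma negOnePow_eq {a b : ℕ} (h : a % 2 = b % 2) : ((-1 : A))^a = (-1)^b := by
  rcases Nat.even_or_odd a with he | ho
  · have hb : Even b := by
      rw [Nat.even_iff] at he ⊢
      omega
    rw [he.neg_one_pow, hb.neg_one_pow]
  · have hb : Odd b := by
      rw [Nat.odd_iff] at ho ⊢
      omega
    rw [ho.neg_one_pow, hb.neg_one_pow]

def Sn (n : ℕ) : Polynomial A := ∑ k ∈ range (2*n+1), Polynomial.C (sv n k) * Polynomial.X^k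

lemma Bn_eq_Sn (n : ℕ) : Bn n = Sn n := by
  apply Polynomial.ext
  intro k
  rw [coeff_Bn, Sn, Polynomial.finset_sum_coeff]
  simp only [Polynomial.coeff_C_mul, Polynomial.coeff_X_pow, mul_ite, mul_one, mul_zero]
  rw [Finset.sum_ite_eq (range (2*n+1)) k (sv n)]
  split_ifs with h
  · rfl
  · exact sv_eq_zero (by simpa using h)

lemma derivSn (n : ℕ) : Polynomial.eval (-1 : A) (Polynomial.derivative (Sn n)) =
    ∑ k ∈ range (2*n+1), (-1)^(k-1) * (k : A) * sv n k := by
  rw [Sn, map_sum, Polynomial.eval_finset_sum]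
  apply Finset.sum_congr rfl
  intro k _
  rw [Polynomial.derivative_C_mul_X_pow, Polynomial.eval_mul, Polynomial.eval_C,
    Polynomial.eval_pow, Polynomial.eval_X]
  ring

lemma evalBnL (n : ℕ) : Polynomial.eval (-1 : A) (BnL n) = Fp n := by
  rw [BnL, Polynomial.eval_prod, Fp]
  apply Finset.prod_congr rfl
  intro i _
  rw [Polynomial.eval_add, Polynomial.eval_one, Polynomial.eval_mul, Polynomial.eval_C,
    Polynomial.eval_X]
  ring

lemma evalG (m : ℕ) :
    Polynomial.eval (-1 : A) (∏ i ∈ range m, (Polynomial.C ((X:A)^(i+1)) + Polynomial.X)) =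
      (-1)^m * Fp m := by
  rw [Polynomial.eval_prod]
  have e : ∀ i ∈ range m, Polynomial.eval (-1:A) (Polynomial.C ((X:A)^(i+1)) + Polynomial.X)
      = (-1) * (1 - X^(i+1)) := by
    intro i _
    rw [Polynomial.eval_add, Polynomial.eval_C, Polynomial.eval_X]
    ring
  rw [Finset.prod_congr rfl e, Finset.prod_mul_distrib, Finset.prod_const, Finset.card_range, Fp]

lemma BnR_succ' (m : ℕ) : BnR (m+1) =
    (∏ i ∈ range m, (Polynomial.C ((X:A)^(i+1)) + Polynomial.X)) * (1 + Polynomial.X) := by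
  rw [BnR, Finset.prod_range_succ', pow_zero, map_one]

lemma derivBn (m : ℕ) :
    Polynomial.eval (-1 : A) (Polynomial.derivative (Bn (m+1))) = Fp (m+1) * ((-1)^m * Fp m) := by
  rw [Bn, BnR_succ', ← mul_assoc, Polynomial.derivative_mul]
  have h0 : Polynomial.eval (-1 : A) (1 + Polynomial.X) = 0 := by
    rw [Polynomial.eval_add, Polynomial.eval_one, Polynomial.eval_X]
    ring
  have h1 : Polynomial.eval (-1:A) (Polynomial.derivative (1 + Polynomial.X : Polynomial A)) = 1 := by
    rw [Polynomial.derivative_add, Polynomial.derivative_one, Polynomial.derivative_X]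
    simp
  rw [Polynomial.eval_add, Polynomial.eval_mul, Polynomial.eval_mul, h0, h1, mul_zero,
    mul_one, zero_add, Polynomial.eval_mul, evalBnL, evalG]

lemma keyIdent2 (m : ℕ) : Fp (m+1) * Fp m =
    ∑ k ∈ range (2*(m+1)+1), (-1)^(m+1+k) * (k:A) * sv (m+1) k := by
  have base : Fp (m+1) * ((-1:A)^m * Fp m) =
      ∑ k ∈ range (2*(m+1)+1), (-1)^(k-1) * (k : A) * sv (m+1) k := by
    rw [← derivSn, ← Bn_eq_Sn, derivBn]
  have h2 : ((-1:A)^m) * ((-1:A)^m) = 1 := by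
    rw [← pow_add]
    exact Even.neg_one_pow ⟨m, by omega⟩
  have lhs : (-1:A)^m * (Fp (m+1) * ((-1:A)^m * Fp m)) = Fp (m+1) * Fp m := by
    calc (-1:A)^m * (Fp (m+1) * ((-1:A)^m * Fp m))
        = ((-1:A)^m * (-1:A)^m) * (Fp (m+1) * Fp m) := by ring
      _ = Fp (m+1) * Fp m := by rw [h2, one_mul]
  rw [← lhs, base, Finset.mul_sum]
  apply Finset.sum_congr rfl
  intro k _
  rcases k with _ | j
  · simp
  · have e1 : ((-1:A))^(j+1-1) = (-1)^j := rfl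
    have e2 : ((-1:A))^(m+1+(j+1)) = (-1)^(m+j) := negOnePow_eq (by omega)
    rw [e1, e2, pow_add]
    ring

/-! ### the truncated Jacobi identity -/

def Jp (L : ℕ) : A := ∑ j ∈ range L, (-1)^j * ((2*j+1 : ℕ) : A) * X^(tri j)

lemma md_Fp {m N : ℕ} (h : m ≤ N) : md (m+1) (Fp N) (Fp m) := by
  have e : Fp N = Fp m * ∏ i ∈ range (N-m), (1 - X^(m+i+1)) := by
    conv_lhs => rw [show N = m + (N-m) by omega]
    exact Fp_add _ _
  have h2 : md (m+1) (∏ i ∈ range (N-m), (1 - X^(m+i+1))) 1 :=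
    md_prod_one fun i _ => md_one_of_le (by omega)
  rw [md, e]
  have e2 : Fp m * ∏ i ∈ range (N-m), (1 - X^(m+i+1)) - Fp m
      = Fp m * ((∏ i ∈ range (N-m), (1 - X^(m+i+1))) - 1) := by ring
  rw [e2]
  exact Dvd.dvd.mul_left h2 _

theorem jacobi (T : ℕ) : md (T+1) (Fp (2*(T+1)) ^ 3) (Jp (T+1)) := by
  set n : ℕ := T+1 with hn
  set N : ℕ := 2*n with hN
  set f : ℕ → A := fun k => (-1)^(n+k) * (k:A) * (Fp N * gb (2*n) k) * X^(w n k) with hf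
  -- step 1 : Fp N ^ 3 ≡ Fp N * (Fp n * Fp T)
  have step1 : md (T+1) (Fp N ^ 3) (Fp N * (Fp n * Fp T)) := by
    have e : Fp N ^ 3 = Fp N * (Fp N * Fp N) := by ring
    rw [e]
    exact md_mul (md_refl _ _)
      (md_mul (md_mono (by omega) (md_Fp (by omega))) (md_mono (by omega) (md_Fp (by omega))))
  -- step 2 : exact identity
  have step2 : Fp N * (Fp n * Fp T) = ∑ k ∈ range (2*n+1), f k := by
    have base := keyIdent2 T
    have e : Fp n * Fp T = ∑ k ∈ range (2*n+1), (-1)^(n+k) * (k:A) * sv n k := base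
    rw [e, Finset.mul_sum]
    apply Finset.sum_congr rfl
    intro k _
    rw [hf, sv]
    ring
  -- step 3 : reorganize the sum
  have step3 : ∑ k ∈ range (2*n+1), f k
      = (∑ j ∈ range n, (f (n-1-j) + f (n+j))) + f (n+n) := by
    have e1 : 2*n+1 = n + (n+1) := by omega
    rw [e1, Finset.sum_range_add]
    have e2 : ∑ i ∈ range n, f i = ∑ j ∈ range n, f (n-1-j) :=
      (Finset.sum_range_reflect f n).symm
    have e3 : ∑ i ∈ range (n+1), f (n+i) = (∑ i ∈ range n, f (n+i)) + f (n+n) :=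
      Finset.sum_range_succ _ _
    rw [e2, e3, Finset.sum_add_distrib, ← add_assoc]
  -- step 4 : each pair is congruent to the Jacobi term
  have pair : ∀ j ∈ range n, md (T+1) (f (n-1-j) + f (n+j))
      ((-1)^j * ((2*j+1 : ℕ) : A) * X^(tri j)) := by
    intro j hj
    rw [Finset.mem_range] at hj
    set U : A := Fp N * gb (2*n) (n+j) with hU
    set V : A := Fp N * gb (2*n) (n-1-j) with hV
    have hUmd : md (n-j) U 1 := by
      have h1 := md_Fp_gb (N := N) (a := 2*n) (b := n+j) (by omega) (by omega)
      have e : min (n+j) (2*n - (n+j)) = n - j := by omega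
      rw [e] at h1
      exact md_mono (by omega) h1
    have hVmd : md (n-j) V 1 := by
      have h1 := md_Fp_gb (N := N) (a := 2*n) (b := n-1-j) (by omega) (by omega)
      have e : min (n-1-j) (2*n - (n-1-j)) + 1 = n - j := by omega
      rw [e] at h1
      exact h1
    have inner : md (n-j) (((n+j : ℕ):A) * U - ((n-1-j : ℕ):A) * V) (((2*j+1 : ℕ) : A)) := by
      have hcast : ((n+j:ℕ):A) = ((n-1-j:ℕ):A) + ((2*j+1:ℕ):A) := by
        rw [← Nat.cast_add]
        congr 1
        omega
      have e : ((n+j : ℕ):A) * U - ((n-1-j : ℕ):A) * V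
          = ((n-1-j : ℕ):A) * (U - V) + ((2*j+1:ℕ):A) * U := by
        rw [hcast]; ring
      rw [e]
      have hUV : md (n-j) (U - V) 0 := by
        rw [md, sub_zero]
        exact md_trans hUmd (md_symm hVmd)
      have h1 := md_mul (md_refl (n-j) (((n-1-j : ℕ):A))) hUV
      have h2 := md_mul (md_refl (n-j) (((2*j+1 : ℕ):A))) hUmd
      have h3 := md_add h1 h2
      simpa using h3
    -- now multiply by the prefactor
    have hmd2 : md (tri j + (n-j)) (X^(tri j) * (((n+j : ℕ):A) * U - ((n-1-j : ℕ):A) * V))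
        (X^(tri j) * ((2*j+1 : ℕ) : A)) := md_mul_pow inner
    have hmd3 : md (T+1) (X^(tri j) * (((n+j : ℕ):A) * U - ((n-1-j : ℕ):A) * V))
        (X^(tri j) * ((2*j+1 : ℕ) : A)) := by
      apply md_mono _ hmd2
      have := tri_ge j
      omega
    have hmd4 := md_mul (md_refl (T+1) ((-1:A)^j)) hmd3
    have eL : f (n-1-j) + f (n+j)
        = (-1:A)^j * (X^(tri j) * (((n+j : ℕ):A) * U - ((n-1-j : ℕ):A) * V)) := by
      rw [hf]
      have s1 : ((-1:A))^(n+(n+j)) = (-1)^j := negOnePow_eq (by omega)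
      have s2 : ((-1:A))^(n+(n-1-j)) = (-1)^(j+1) := negOnePow_eq (by omega)
      have w1' : w n (n+j) = tri j := w_ge n j
      have w2' : w n (n-1-j) = tri j := w_lt hj
      simp only [s1, s2, w1', w2', hU, hV, pow_succ]
      ring
    have eR : (-1:A)^j * ((2*j+1 : ℕ) : A) * X^(tri j)
        = (-1:A)^j * (X^(tri j) * ((2*j+1 : ℕ) : A)) := by ring
    rw [eL, eR]
    exact hmd4
  -- step 5 : top term vanishes
  have tail : md (T+1) (f (n+n)) 0 := by
    have e : f (n+n) = X^(w n (n+n)) * ((-1)^(n+(n+n)) * ((n+n:ℕ):A) * (Fp N * gb (2*n) (n+n))) := by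
      rw [hf]; ring
    rw [e]
    apply md_zero_of_le
    rw [w_ge n n]
    have := tri_ge n
    omega
  -- assemble
  have sum_md : md (T+1) (∑ k ∈ range (2*n+1), f k) (Jp n) := by
    rw [step3, Jp]
    have h1 : md (T+1) (∑ j ∈ range n, (f (n-1-j) + f (n+j)))
        (∑ j ∈ range n, (-1)^j * ((2*j+1 : ℕ) : A) * X^(tri j)) := md_sum pair
    have h2 := md_add h1 tail
    simpa using h2
  exact md_trans (md_trans step1 (by rw [step2]; exact md_refl _ _)) sum_md
-- stage 5 : partition generating function (adapted from Archive/Wiedijk100Theorems/Partition.lean)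

open Finset.HasAntidiagonal

open scoped Classical in
/-- A convenience constructor for the power series whose coefficients indicate a subset. -/
def indicatorSeries (α : Type*) [Semiring α] (s : Set ℕ) : PowerSeries α :=
  PowerSeries.mk fun n => if n ∈ s then 1 else 0

open scoped Classical in
theorem coeff_indicator {α : Type*} (s : Set ℕ) [Semiring α] (n : ℕ) :
    coeff n (indicatorSeries α s) = if n ∈ s then 1 else 0 :=
  coeff_mk _ _

open scoped Classical in
theorem constantCoeff_indicator {α : Type*} (s : Set ℕ) [Semiring α] :
    constantCoeff (indicatorSeries α s) = if 0 ∈ s then 1 else 0 :=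
  rfl

open scoped Classical in
theorem num_series' {α : Type*} [Field α] (i : ℕ) :
    (1 - (X : PowerSeries α) ^ (i + 1))⁻¹ = indicatorSeries α {k | i + 1 ∣ k} := by
  rw [PowerSeries.inv_eq_iff_mul_eq_one]
  · ext n
    cases n with
    | zero => simp [mul_sub, zero_pow, constantCoeff_indicator]
    | succ n =>
      simp only [coeff_one, if_false, mul_sub, mul_one, coeff_indicator,
        LinearMap.map_sub, reduceCtorEq]
      simp_rw [coeff_mul, coeff_X_pow, coeff_indicator, @boole_mul _ _ _ _]
      erw [@sum_ite _ _ _ _ _ (fun _ => Classical.propDecidable _), sum_ite]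
      simp_rw [@filter_filter _ _ _ _ _, sum_const_zero, add_zero, sum_const, nsmul_eq_mul, mul_one,
        sub_eq_iff_eq_add, zero_add]
      symm
      split_ifs with h
      · suffices #{a ∈ antidiagonal (n + 1) | i + 1 ∣ a.fst ∧ a.snd = i + 1} = 1 by
          simp only [Set.mem_setOf_eq]; convert congr_arg ((↑) : ℕ → α) this; norm_cast
        rw [card_eq_one]
        cases' h with p hp
        refine ⟨((i + 1) * (p - 1), i + 1), ?_⟩
        ext ⟨a₁, a₂⟩
        simp only [mem_filter, Prod.mk.injEq, HasAntidiagonal.mem_antidiagonal, mem_singleton]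
        constructor
        · rintro ⟨a_left, ⟨a, rfl⟩, rfl⟩
          refine ⟨?_, rfl⟩
          rw [Nat.mul_sub_left_distrib, ← hp, ← a_left, mul_one, Nat.add_sub_cancel]
        · rintro ⟨rfl, rfl⟩
          match p with
          | 0 => rw [mul_zero] at hp; cases hp
          | p + 1 => rw [hp]; simp [mul_add]
      · suffices #{a ∈ antidiagonal (n + 1) | i + 1 ∣ a.fst ∧ a.snd = i + 1} = 0 by
          simp only [Set.mem_setOf_eq]; convert congr_arg ((↑) : ℕ → α) this; norm_cast
        rw [card_eq_zero]
        apply eq_empty_of_forall_notMem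
        simp only [Prod.forall, mem_filter, not_and, HasAntidiagonal.mem_antidiagonal]
        rintro _ h₁ h₂ ⟨a, rfl⟩ rfl
        apply h
        simp [← h₂]
  · simp [zero_pow]

open scoped Classical in
-- The main workhorse of the partition theorem proof.
theorem partialGF_prop (α : Type*) [CommSemiring α] (n : ℕ) (s : Finset ℕ) (hs : ∀ i ∈ s, 0 < i)
    (c : ℕ → Set ℕ) (hc : ∀ i, i ∉ s → 0 ∈ c i) :
    #{p : n.Partition | (∀ j, p.parts.count j ∈ c j) ∧ ∀ j ∈ p.parts, j ∈ s} =
      coeff n (∏ i ∈ s, indicatorSeries α ((· * i) '' c i)) := by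
  simp_rw [coeff_prod, coeff_indicator, prod_boole, sum_boole]
  apply congr_arg
  simp only [mem_univ, forall_true_left, not_and, not_forall, exists_prop,
    Set.mem_image, not_exists]
  set φ : (a : Nat.Partition n) →
    a ∈ filter (fun p ↦ (∀ (j : ℕ), Multiset.count j p.parts ∈ c j) ∧ ∀ j ∈ p.parts, j ∈ s) univ →
    ℕ →₀ ℕ := fun p _ => {
      toFun := fun i => Multiset.count i p.parts • i
      support := Finset.filter (fun i => i ≠ 0) p.parts.toFinset
      mem_support_toFun := fun a => by
        simp only [smul_eq_mul, ne_eq, mul_eq_zero, Multiset.count_eq_zero]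
        rw [not_or, not_not]
        simp only [Multiset.mem_toFinset, not_not, mem_filter] }
  refine Finset.card_bij φ ?_ ?_ ?_
  · intro a ha
    simp only [φ, not_forall, not_exists, not_and, exists_prop, mem_filter]
    rw [mem_finsuppAntidiag]
    dsimp only [ne_eq, smul_eq_mul, id_eq, eq_mpr_eq_cast, le_eq_subset, Finsupp.coe_mk]
    simp only [mem_univ, forall_true_left, not_and, not_forall, exists_prop,
      mem_filter, true_and] at ha
    refine ⟨⟨?_, fun i ↦ ?_⟩, fun i _ ↦ ⟨a.parts.count i, ha.1 i, rfl⟩⟩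
    · conv_rhs => simp [← a.parts_sum]
      rw [sum_multiset_count_of_subset _ s]
      · simp only [smul_eq_mul]
      · intro i
        simp only [Multiset.mem_toFinset, not_not, mem_filter]
        apply ha.2
    · simp only [ne_eq, Multiset.mem_toFinset, not_not, mem_filter, and_imp]
      exact fun hi _ ↦ ha.2 i hi
  · intro p₁ hp₁ p₂ hp₂ h
    apply Nat.Partition.ext
    simp only [true_and, mem_univ, mem_filter] at hp₁ hp₂
    ext i
    simp only [φ, ne_eq, Multiset.mem_toFinset, not_not, smul_eq_mul, Finsupp.mk.injEq] at h
    by_cases hi : i = 0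
    · rw [hi]
      rw [Multiset.count_eq_zero_of_notMem]
      · rw [Multiset.count_eq_zero_of_notMem]
        intro a; exact Nat.lt_irrefl 0 (hs 0 (hp₂.2 0 a))
      intro a; exact Nat.lt_irrefl 0 (hs 0 (hp₁.2 0 a))
    · rw [← mul_left_inj' hi]
      rw [funext_iff] at h
      exact h.2 i
  · simp only [φ, mem_filter, mem_finsuppAntidiag, mem_univ, exists_prop, true_and, and_assoc]
    rintro f ⟨hf, hf₃, hf₄⟩
    have hf' : f ∈ finsuppAntidiag s n := mem_finsuppAntidiag.mpr ⟨hf, hf₃⟩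
    simp only [mem_finsuppAntidiag] at hf'
    refine ⟨⟨∑ i ∈ s, Multiset.replicate (f i / i) i, ?_, ?_⟩, ?_, ?_, ?_⟩
    · intro i hi
      simp only [exists_prop, Multiset.mem_sum, mem_map, Function.Embedding.coeFn_mk] at hi
      rcases hi with ⟨t, ht, z⟩
      apply hs
      rwa [Multiset.eq_of_mem_replicate z]
    · simp_rw [Multiset.sum_sum, Multiset.sum_replicate, Nat.nsmul_eq_mul]
      rw [← hf'.1]
      refine sum_congr rfl fun i hi => Nat.div_mul_cancel ?_
      rcases hf₄ i hi with ⟨w, _, hw₂⟩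
      rw [← hw₂]
      exact dvd_mul_left _ _
    · intro i
      simp_rw [Multiset.count_sum', Multiset.count_replicate, sum_ite_eq']
      split_ifs with h
      · rcases hf₄ i h with ⟨w, hw₁, hw₂⟩
        rwa [← hw₂, Nat.mul_div_cancel _ (hs i h)]
      · exact hc _ h
    · intro i hi
      rw [Multiset.mem_sum] at hi
      rcases hi with ⟨j, hj₁, hj₂⟩
      rwa [Multiset.eq_of_mem_replicate hj₂]
    · ext i
      simp_rw [Multiset.count_sum', Multiset.count_replicate, sum_ite_eq']
      simp only [ne_eq, Multiset.mem_toFinset, not_not, smul_eq_mul, ite_mul,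
        zero_mul, Finsupp.coe_mk]
      split_ifs with h
      · apply Nat.div_mul_cancel
        rcases hf₄ i h with ⟨w, _, hw₂⟩
        apply Dvd.intro_left _ hw₂
      · apply symm
        rw [← Finsupp.notMem_support_iff]
        exact notMem_mono hf'.2 h
-- stage 6 : assembly

def Pp (N : ℕ) : A := ∏ i ∈ range N, (1 - X^(i+1))⁻¹

lemma constCoeff_fac (i : ℕ) : constantCoeff (1 - X^(i+1) : A) = 1 := by
  rw [map_sub, map_one, map_pow, constantCoeff_X, zero_pow (by omega), sub_zero]

lemma Fp_mul_Pp (N : ℕ) : Fp N * Pp N = 1 := by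
  rw [Fp, Pp, ← Finset.prod_mul_distrib]
  apply Finset.prod_eq_one
  intro i _
  exact PowerSeries.mul_inv_cancel _ (by rw [constCoeff_fac]; exact one_ne_zero)

lemma coeff_Pp {n N : ℕ} (h : n ≤ N) :
    coeff n (Pp N) = (Fintype.card (Nat.Partition n) : ZMod 5) := by
  classical
  have hGF := partialGF_prop (ZMod 5) n ((range N).map ⟨Nat.succ, Nat.succ_injective⟩)
    (fun i hi => by
      rcases Finset.mem_map.mp hi with ⟨x, _, rfl⟩
      exact Nat.succ_pos x)
    (fun _ => Set.univ) (fun _ _ => trivial)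
  have e1 : Pp N = ∏ i ∈ (range N).map ⟨Nat.succ, Nat.succ_injective⟩,
      indicatorSeries (ZMod 5) ((· * i) '' Set.univ) := by
    rw [Finset.prod_map, Pp]
    apply Finset.prod_congr rfl
    intro x _
    have hset : ((· * (x+1)) '' Set.univ) = {k | x + 1 ∣ k} := by
      ext m
      simp only [Set.image_univ, Set.mem_range, Set.mem_setOf_eq]
      constructor
      · rintro ⟨a, rfl⟩
        exact Dvd.intro_left a rfl
      · rintro ⟨c, rfl⟩
        exact ⟨c, (mul_comm _ _)⟩
    show (1 - X^(x+1))⁻¹ = indicatorSeries (ZMod 5) ((· * (Nat.succ x)) '' Set.univ)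
    rw [num_series', ← hset]
  rw [e1, ← hGF]
  congr 1
  have : ∀ p : Nat.Partition n,
      ((∀ j, p.parts.count j ∈ (Set.univ : Set ℕ)) ∧
        ∀ j ∈ p.parts, j ∈ (range N).map ⟨Nat.succ, Nat.succ_injective⟩) := by
    intro p
    refine ⟨fun _ => trivial, fun j hj => ?_⟩
    have hpos : 0 < j := p.parts_pos hj
    have hle : j ≤ n := by
      rw [← p.parts_sum]
      exact Multiset.single_le_sum (fun x _ => Nat.zero_le x) j hj
    apply Finset.mem_map.mpr
    exact ⟨j - 1, Finset.mem_range.mpr (by omega), by simp [Nat.succ_eq_add_one]; omega⟩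
  rw [Finset.filter_true_of_mem (fun p _ => this p), Finset.card_univ]

lemma Fp_pow_five (N : ℕ) : Fp N ^ 5 = ∏ i ∈ range N, (1 - X^(5*(i+1))) := by
  rw [Fp, ← Finset.prod_pow]
  apply Finset.prod_congr rfl
  intro i _
  rw [sub_pow_char, one_pow, ← pow_mul, mul_comm (i+1) 5]

def Qs (N : ℕ) : A := ∏ i ∈ range N, (1 - X^(5*(i+1)))⁻¹

lemma constCoeff_fac5 (i : ℕ) : constantCoeff (1 - X^(5*(i+1)) : A) = 1 := by
  rw [map_sub, map_one, map_pow, constantCoeff_X, zero_pow (by omega), sub_zero]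

lemma Fp5_mul_Qs (N : ℕ) : Fp N ^ 5 * Qs N = 1 := by
  rw [Fp_pow_five, Qs, ← Finset.prod_mul_distrib]
  apply Finset.prod_eq_one
  intro i _
  exact PowerSeries.mul_inv_cancel _ (by rw [constCoeff_fac5]; exact one_ne_zero)

/-- supported on multiples of 5 -/
def S5 (f : A) : Prop := ∀ m : ℕ, ¬ (5 ∣ m) → coeff m f = 0

lemma S5_one : S5 1 := by
  intro m hm
  have hm0 : m ≠ 0 := fun h => hm (by rw [h]; exact dvd_zero 5)
  rw [coeff_one, if_neg hm0]

lemma S5_mul {f g : A} (hf : S5 f) (hg : S5 g) : S5 (f * g) := by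
  intro m hm
  rw [coeff_mul]
  apply Finset.sum_eq_zero
  intro p hp
  rw [HasAntidiagonal.mem_antidiagonal] at hp
  by_cases h1 : 5 ∣ p.1
  · have h2 : ¬ 5 ∣ p.2 := fun h => hm (by omega)
    rw [hg p.2 h2, mul_zero]
  · rw [hf p.1 h1, zero_mul]

lemma S5_factor (i : ℕ) : S5 ((1 - X^(5*(i+1)))⁻¹) := by
  intro m hm
  classical
  have e : 5*(i+1) = (5*i+4)+1 := by omega
  have hdvd : ¬ (5*i+4+1) ∣ m := by
    intro hd
    exact hm (dvd_trans ⟨i+1, by omega⟩ hd)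
  rw [e, num_series', coeff_indicator]
  split_ifs with hcase
  · exact absurd (by simpa using hcase) hdvd
  · rfl

lemma S5_Qs (N : ℕ) : S5 (Qs N) := by
  rw [Qs]
  refine Finset.prod_induction _ S5 (fun a b ha hb => S5_mul ha hb) S5_one ?_
  intro i _
  exact S5_factor i

lemma S5_Qs_sq (N : ℕ) : S5 (Qs N ^ 2) := by
  rw [pow_two]
  exact S5_mul (S5_Qs N) (S5_Qs N)
-- stage 7 : the congruence

lemma zmod5_key : ∀ x y z : ZMod 5, x*(x+1)+y*(y+1)+z*(z+1) = 3 →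
    (2*x+1 = 0 ∨ 2*y+1 = 0 ∨ 2*z+1 = 0) := by decide

def jc (j : ℕ) : ZMod 5 := (-1)^j * ((2*j+1 : ℕ) : ZMod 5)

lemma Jp_eq (L : ℕ) : Jp L = ∑ j ∈ range L, PowerSeries.C (jc j) * X^(tri j) := by
  rw [Jp]
  apply Finset.sum_congr rfl
  intro j _
  congr 1
  rw [jc, map_mul, map_pow, map_neg, map_one, map_natCast]

lemma sum_cube (u : ℕ → A) (L : ℕ) : (∑ j ∈ range L, u j)^3 =
    ∑ j1 ∈ range L, ∑ j2 ∈ range L, ∑ j3 ∈ range L, u j1 * u j2 * u j3 := by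
  rw [show (∑ j ∈ range L, u j)^3
      = (∑ j ∈ range L, u j) * (∑ j ∈ range L, u j) * (∑ j ∈ range L, u j) from by ring]
  rw [Finset.sum_mul_sum, Finset.sum_mul]
  apply Finset.sum_congr rfl
  intro j1 _
  rw [Finset.sum_mul]
  apply Finset.sum_congr rfl
  intro j2 _
  rw [Finset.mul_sum]

lemma jc_vanish {j1 j2 j3 a : ℕ} (ha : a % 5 = 4) (heq : tri j1 + tri j2 + tri j3 = a) :
    jc j1 * jc j2 * jc j3 = 0 := by
  have h2 : j1*(j1+1) + j2*(j2+1) + j3*(j3+1) = 2*a := by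
    have t1 := two_tri j1
    have t2 := two_tri j2
    have t3 := two_tri j3
    omega
  have hc : ((j1:ZMod 5))*((j1:ZMod 5)+1) + ((j2:ZMod 5))*((j2:ZMod 5)+1)
      + ((j3:ZMod 5))*((j3:ZMod 5)+1) = 3 := by
    have hcast := congrArg (Nat.cast : ℕ → ZMod 5) h2
    push_cast at hcast
    rw [← ZMod.natCast_mod a 5, ha] at hcast
    rw [hcast]
    decide
  rcases zmod5_key _ _ _ hc with h | h | h
  · have hz : jc j1 = 0 := by
      rw [jc, show ((2*j1+1 : ℕ) : ZMod 5) = 0 from by push_cast; exact h, mul_zero]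
    rw [hz, zero_mul, zero_mul]
  · have hz : jc j2 = 0 := by
      rw [jc, show ((2*j2+1 : ℕ) : ZMod 5) = 0 from by push_cast; exact h, mul_zero]
    rw [hz, mul_zero, zero_mul]
  · have hz : jc j3 = 0 := by
      rw [jc, show ((2*j3+1 : ℕ) : ZMod 5) = 0 from by push_cast; exact h, mul_zero]
    rw [hz, mul_zero]

lemma coeff_Jp3 {L a : ℕ} (ha : a % 5 = 4) : coeff a ((Jp L)^3) = 0 := by
  rw [Jp_eq, sum_cube, map_sum]
  apply Finset.sum_eq_zero
  intro j1 _
  rw [map_sum]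
  apply Finset.sum_eq_zero
  intro j2 _
  rw [map_sum]
  apply Finset.sum_eq_zero
  intro j3 _
  have e : PowerSeries.C (jc j1) * X^(tri j1) * (PowerSeries.C (jc j2) * X^(tri j2))
      * (PowerSeries.C (jc j3) * X^(tri j3))
      = PowerSeries.C (jc j1 * jc j2 * jc j3) * X^(tri j1 + tri j2 + tri j3) := by
    rw [map_mul, map_mul, pow_add, pow_add]
    ring
  rw [e]
  by_cases h : a = tri j1 + tri j2 + tri j3
  · rw [jc_vanish ha (by omega), map_zero, zero_mul]
    exact map_zero _
  · rw [PowerSeries.coeff_C_mul, coeff_X_pow, if_neg h, mul_zero]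

theorem main (T : ℕ) (hT : T % 5 = 4) : (Fintype.card (Nat.Partition T) : ZMod 5) = 0 := by
  set N : ℕ := 2*(T+1) with hN
  have h1 := Fp_mul_Pp N
  have h2 := Fp5_mul_Qs N
  have hexact : Pp N = Fp N ^ 9 * Qs N ^ 2 := by
    calc Pp N = Pp N * ((Fp N^5 * Qs N) * (Fp N^5 * Qs N)) := by rw [h2]; ring
      _ = (Fp N * Pp N) * (Fp N ^ 9 * Qs N ^2) := by ring
      _ = Fp N ^ 9 * Qs N ^ 2 := by rw [h1, one_mul]
  have hmd : md (T+1) (Pp N) (Jp (T+1)^3 * Qs N^2) := by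
    rw [hexact, show Fp N ^ 9 = (Fp N^3)^3 from by ring]
    exact md_mul (md_pow (jacobi T) 3) (md_refl _ _)
  have hcoeff : coeff T (Pp N) = coeff T (Jp (T+1)^3 * Qs N^2) :=
    md_coeff hmd (by omega)
  rw [← coeff_Pp (show T ≤ N by omega), hcoeff, coeff_mul]
  apply Finset.sum_eq_zero
  intro p hp
  rw [HasAntidiagonal.mem_antidiagonal] at hp
  by_cases h5 : (5:ℕ) ∣ p.2
  · have hp1 : p.1 % 5 = 4 := by omega
    rw [coeff_Jp3 hp1, zero_mul]
  · rw [S5_Qs_sq N p.2 h5, mul_zero]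

end
end Raman

/-- Ramanujan's congruence: `p(5n+4) ≡ 0 (mod 5)`. -/
theorem ramanujan_mod_five (n : ℕ) :
    5 ∣ Fintype.card (Nat.Partition (5 * n + 4)) := by
  have h := Raman.main (5*n+4) (by omega)
  exact (ZMod.natCast_eq_zero_iff _ _).mp h
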